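/- arXiv:1812.04112 — 4 statements merged into one kernel-verified Lean document; each statement's English description precedes it below -/
import Mathlib

section
/- Fix T > 0 and let K be the set of all functions x : [0,∞) → ℝ such that x is nondecreasing, x(0) = 0, x is left-continuous at every t > 0, 0 ≤ x(t) ≤ 1 for all t, and x is constant on (T,∞). Then K is convex, and the set of extreme points of K (with respect to the real vector space of functions [0,∞) → ℝ) is exactly {x ∈ K : x(t) ∈ {0,1} for all t}. -/
open Set NNReal

/-- The set of "paths of randomized stopping times": nondecreasing, left-continuous
functions `x : [0,∞) → ℝ` with `x 0 = 0`, `0 ≤ x t ≤ 1`, constant on `(T,∞)`,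
is convex and its extreme points are exactly its `{0,1}`-valued elements. -/
theorem extremePoints_randomized_stopping_times
    (T : ℝ≥0) (hT : 0 < T) (K : Set (ℝ≥0 → ℝ))
    (hK : K = {x : ℝ≥0 → ℝ |
      Monotone x ∧ x 0 = 0 ∧
      (∀ t : ℝ≥0, 0 < t → ContinuousWithinAt x (Set.Iio t) t) ∧
      (∀ t : ℝ≥0, x t ∈ Set.Icc (0:ℝ) 1) ∧
      (∀ s t : ℝ≥0, T < s → T < t → x s = x t)}) :
    Convex ℝ K ∧
      Set.extremePoints ℝ K = {x ∈ K | ∀ t : ℝ≥0, x t = 0 ∨ x t = 1} := by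
  subst hK
  constructor
  · -- Convexity
    rintro p ⟨hpm, hp0, hpl, hpI, hpc⟩ q ⟨hqm, hq0, hql, hqI, hqc⟩ α β hα hβ hαβ
    refine ⟨?_, ?_, ?_, ?_, ?_⟩
    · intro u v huv
      have h1 := hpm huv
      have h2 := hqm huv
      simp only [Pi.add_apply, Pi.smul_apply, smul_eq_mul]
      nlinarith
    · simp only [Pi.add_apply, Pi.smul_apply, smul_eq_mul, hp0, hq0]; ring
    · intro t ht
      exact ((continuousWithinAt_const.mul (hpl t ht)).add
        (continuousWithinAt_const.mul (hql t ht)))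
    · intro t
      obtain ⟨hp1, hp2⟩ := hpI t
      obtain ⟨hq1, hq2⟩ := hqI t
      simp only [Pi.add_apply, Pi.smul_apply, smul_eq_mul, Set.mem_Icc]
      constructor <;> nlinarith
    · intro u v hu hv
      simp only [Pi.add_apply, Pi.smul_apply, smul_eq_mul, hpc u v hu hv, hqc u v hu hv]
  · ext x
    constructor
    · -- extreme point → {0,1}-valued
      rintro ⟨hxK, hx⟩
      refine ⟨hxK, ?_⟩
      intro t
      by_contra h
      push_neg at h
      obtain ⟨h0, h1⟩ := h
      obtain ⟨hxm, hx0, hxl, hxI, hxc⟩ := hxK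
      have hs0 : 0 < x t := lt_of_le_of_ne (hxI t).1 (Ne.symm h0)
      have hs1 : x t < 1 := lt_of_le_of_ne (hxI t).2 h1
      set s : ℝ := x t with hs
      have hs1' : 0 < 1 - s := by linarith
      set a : ℝ≥0 → ℝ := fun u => min (x u) s / s with ha
      set b : ℝ≥0 → ℝ := fun u => max (x u - s) 0 / (1 - s) with hb
      have haK : a ∈ {x : ℝ≥0 → ℝ |
          Monotone x ∧ x 0 = 0 ∧
          (∀ t : ℝ≥0, 0 < t → ContinuousWithinAt x (Set.Iio t) t) ∧
          (∀ t : ℝ≥0, x t ∈ Set.Icc (0:ℝ) 1) ∧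
          (∀ s t : ℝ≥0, T < s → T < t → x s = x t)} := by
        refine ⟨?_, ?_, ?_, ?_, ?_⟩
        · intro u v huv
          have := hxm huv
          simp only [ha]
          gcongr
        · simp only [ha, hx0, min_eq_left hs0.le, zero_div]
        · intro u hu
          exact (((hxl u hu).min continuousWithinAt_const).div_const s)
        · intro u
          constructor
          · exact div_nonneg (le_min (hxI u).1 hs0.le) hs0.le
          · exact div_le_one_of_le₀ (min_le_right _ _) hs0.le
        · intro u v hu hv
          simp only [ha, hxc u v hu hv]
      have hbK : b ∈ {x : ℝ≥0 → ℝ |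
          Monotone x ∧ x 0 = 0 ∧
          (∀ t : ℝ≥0, 0 < t → ContinuousWithinAt x (Set.Iio t) t) ∧
          (∀ t : ℝ≥0, x t ∈ Set.Icc (0:ℝ) 1) ∧
          (∀ s t : ℝ≥0, T < s → T < t → x s = x t)} := by
        refine ⟨?_, ?_, ?_, ?_, ?_⟩
        · intro u v huv
          have := hxm huv
          simp only [hb]
          gcongr
        · simp only [hb, hx0]
          rw [max_eq_right (by linarith), zero_div]
        · intro u hu
          exact (((hxl u hu).sub continuousWithinAt_const).max continuousWithinAt_const).div_const _
        · intro u
          constructor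
          · exact div_nonneg (le_max_right _ _) hs1'.le
          · apply div_le_one_of_le₀ _ hs1'.le
            exact max_le (by linarith [(hxI u).2]) hs1'.le
        · intro u v hu hv
          simp only [hb, hxc u v hu hv]
      have hseg : x ∈ openSegment ℝ a b := by
        refine ⟨s, 1 - s, hs0, hs1', by ring, ?_⟩
        funext u
        simp only [Pi.add_apply, Pi.smul_apply, smul_eq_mul, ha, hb]
        rw [mul_div_cancel₀ _ hs0.ne', mul_div_cancel₀ _ hs1'.ne']
        rcases le_total (x u) s with hle | hle
        · rw [min_eq_left hle, max_eq_right (by linarith)]; ring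
        · rw [min_eq_right hle, max_eq_left (by linarith)]; ring
      have hax : a = x := (hx haK hbK hseg)
      have : a t = 1 := by
        simp only [ha, ← hs, min_self, div_self hs0.ne']
      rw [hax] at this
      exact hs1.ne (by rw [← this])
    · -- {0,1}-valued → extreme point
      rintro ⟨hxK, hx01⟩
      refine ⟨hxK, ?_⟩
      rintro p hpK q hqK ⟨α, β, hα, hβ, hαβ, heq⟩
      obtain ⟨hpm, hp0, hpl, hpI, hpc⟩ := hpK
      obtain ⟨hqm, hq0, hql, hqI, hqc⟩ := hqK
      have key : ∀ t : ℝ≥0, p t = x t ∧ q t = x t := by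
        intro t
        have ht : α * p t + β * q t = x t := by
          have := congrFun heq t
          simpa [Pi.add_apply, Pi.smul_apply, smul_eq_mul] using this
        obtain ⟨hp1, hp2⟩ := hpI t
        obtain ⟨hq1, hq2⟩ := hqI t
        rcases hx01 t with h | h <;> rw [h] at ht ⊢ <;> constructor <;> nlinarith
      exact funext fun t => (key t).1
end

section
/- Fix T > 0 and let K̂ be the set of all functions x : [0,∞) → ℝ such that x is nondecreasing, x(0) = 0, 0 ≤ x(t) ≤ 1 for all t, and x is constant on (T,∞) (no left- or right-continuity is assumed). Then K̂ is convex, and the set of extreme points of K̂ (with respect to the real vector space of functions [0,∞) → ℝ) is exactly {x ∈ K̂ : x(t) ∈ {0,1} for all t}. -/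
open Set NNReal

/-- The set of "paths of relaxed quasi-stopping times": nondecreasing functions
`x : [0,∞) → ℝ` with `x 0 = 0`, `0 ≤ x t ≤ 1`, constant on `(T,∞)` (no one-sided
continuity assumed), is convex and its extreme points are exactly its
`{0,1}`-valued elements. -/
theorem extremePoints_relaxed_quasi_stopping_times
    (T : ℝ≥0) (hT : 0 < T) (K : Set (ℝ≥0 → ℝ))
    (hK : K = {x : ℝ≥0 → ℝ |
      Monotone x ∧ x 0 = 0 ∧
      (∀ t : ℝ≥0, x t ∈ Set.Icc (0:ℝ) 1) ∧
      (∀ s t : ℝ≥0, T < s → T < t → x s = x t)}) :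
    Convex ℝ K ∧
      Set.extremePoints ℝ K = {x ∈ K | ∀ t : ℝ≥0, x t = 0 ∨ x t = 1} := by
  subst hK
  constructor
  · -- convexity
    intro x hx y hy p q hp hq hpq
    obtain ⟨hxm, hx0, hxb, hxc⟩ := hx
    obtain ⟨hym, hy0, hyb, hyc⟩ := hy
    refine ⟨?_, ?_, ?_, ?_⟩
    · intro s t hst
      have h1 := hxm hst
      have h2 := hym hst
      simp only [Pi.add_apply, Pi.smul_apply, smul_eq_mul]
      nlinarith
    · simp [hx0, hy0]
    · intro t
      obtain ⟨h1, h2⟩ := hxb t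
      obtain ⟨h3, h4⟩ := hyb t
      constructor
      · simp only [Pi.add_apply, Pi.smul_apply, smul_eq_mul]; nlinarith
      · simp only [Pi.add_apply, Pi.smul_apply, smul_eq_mul]; nlinarith
    · intro s t hs ht
      simp only [Pi.add_apply, Pi.smul_apply, smul_eq_mul, hxc s t hs ht, hyc s t hs ht]
  · -- extreme points
    ext x
    constructor
    · rintro ⟨hxK, hext⟩
      refine ⟨hxK, ?_⟩
      by_contra h
      push_neg at h
      obtain ⟨t0, ht0, ht1⟩ := h
      obtain ⟨hxm, hx0, hxb, hxc⟩ := hxK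
      obtain ⟨hc0, hc1⟩ := hxb t0
      have hc0' : 0 < x t0 := lt_of_le_of_ne hc0 (Ne.symm ht0)
      have hc1' : x t0 < 1 := lt_of_le_of_ne hc1 ht1
      set c : ℝ := x t0 with hc
      set ε : ℝ := (1 - c) / (1 + c) with hε
      have hεpos : 0 < ε := by
        rw [hε]; exact div_pos (by linarith) (by linarith)
      have hεlt : ε < 1 := by
        rw [hε, div_lt_one (by linarith)]; linarith
      set a : ℝ≥0 → ℝ := fun t => min ((1 + ε) * x t) 1 with ha
      set b : ℝ≥0 → ℝ := fun t => 2 * x t - a t with hb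
      have hax : ∀ t, x t ≤ a t := by
        intro t
        exact le_min (by nlinarith [(hxb t).1]) (hxb t).2
      have key : ∀ s t : ℝ≥0, s ≤ t → a t - a s ≤ (1 + ε) * (x t - x s) := by
        intro s t h
        have hst := hxm h
        simp only [ha]
        rcases le_total ((1 + ε) * x t) 1 with h1 | h1
        · rw [min_eq_left h1, min_eq_left (le_trans (by nlinarith) h1)]
          nlinarith
        · rw [min_eq_right h1]
          rcases le_total ((1 + ε) * x s) 1 with h2 | h2
          · rw [min_eq_left h2]; nlinarith
          · rw [min_eq_right h2]; nlinarith
      have haK : a ∈ {x : ℝ≥0 → ℝ | Monotone x ∧ x 0 = 0 ∧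
          (∀ t : ℝ≥0, x t ∈ Set.Icc (0:ℝ) 1) ∧
          (∀ s t : ℝ≥0, T < s → T < t → x s = x t)} := by
        refine ⟨?_, ?_, ?_, ?_⟩
        · intro s t h
          have := hxm h
          exact min_le_min (by nlinarith) le_rfl
        · simp [ha, hx0]
        · intro t
          exact ⟨le_min (by nlinarith [(hxb t).1]) zero_le_one, min_le_right _ _⟩
        · intro s t hs ht
          simp only [ha, hxc s t hs ht]
      have hbK : b ∈ {x : ℝ≥0 → ℝ | Monotone x ∧ x 0 = 0 ∧
          (∀ t : ℝ≥0, x t ∈ Set.Icc (0:ℝ) 1) ∧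
          (∀ s t : ℝ≥0, T < s → T < t → x s = x t)} := by
        refine ⟨?_, ?_, ?_, ?_⟩
        · intro s t h
          have h1 := key s t h
          have h2 := hxm h
          simp only [hb]
          nlinarith
        · simp [hb, ha, hx0]
        · intro t
          constructor
          · have : a t ≤ (1 + ε) * x t := min_le_left _ _
            simp only [hb]
            nlinarith [(hxb t).1]
          · simp only [hb]
            nlinarith [hax t, (hxb t).2]
        · intro s t hs ht
          simp only [hb, ha, hxc s t hs ht]
      have hseg : x ∈ openSegment ℝ a b := by
        refine ⟨1/2, 1/2, by norm_num, by norm_num, by norm_num, ?_⟩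
        funext t
        simp only [Pi.add_apply, Pi.smul_apply, smul_eq_mul, hb]
        ring
      have hax0 := hext haK hbK hseg
      have he : ε * (1 + c) = 1 - c := by rw [hε]; field_simp
      have h1 : (1 + ε) * c ≤ 1 := by nlinarith
      have h2 : c < (1 + ε) * c := by nlinarith
      have h3 : a t0 = (1 + ε) * c := by
        simp only [ha, ← hc]
        exact min_eq_left h1
      have h4 := congrFun hax0 t0
      rw [h3, ← hc] at h4
      nlinarith
    · rintro ⟨hxK, h01⟩
      refine ⟨hxK, ?_⟩
      intro y hy z hz hseg
      obtain ⟨p, q, hp, hq, hpq, heq⟩ := hseg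
      have hpt : ∀ t, p * y t + q * z t = x t := by
        intro t
        have := congrFun heq t
        simpa using this
      have hyz : ∀ t, y t = x t ∧ z t = x t := by
        intro t
        obtain ⟨hy0, hy1⟩ := hy.2.2.1 t
        obtain ⟨hz0, hz1⟩ := hz.2.2.1 t
        have h := hpt t
        rcases h01 t with h0 | h1
        · rw [h0] at h ⊢
          constructor <;> nlinarith
        · rw [h1] at h ⊢
          constructor <;> nlinarith
      exact funext fun t => (hyz t).1
end

section
/- Let (Ω, F, (F_t)_{t∈[0,T]}, P) be a filtered probability space with finite horizon T > 0 satisfying the usual conditions (the filtration is right-continuous and F_0 contains all P-null sets). Let R be an adapted real-valued process on [0,T] with continuous paths which is of class (D), i.e. the family {R_τ : τ a stopping time with values in [0,T]} is uniformly integrable. Then there exists a stopping time τ* with values in [0,T] such that E[R_{τ*}] = sup_τ E[R_τ], the supremum being over all stopping times τ with values in [0,T]. -/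
open MeasureTheory Filter Set

/-- A stopping time with values in `[0, T]`. -/
def StoppingTimeIn {Ω : Type*} {m : MeasurableSpace Ω} (F : Filtration ℝ m) (T : ℝ)
    (τ : Ω → ℝ) : Prop :=
  IsStoppingTime F (fun ω => (τ ω : WithTop ℝ)) ∧ ∀ ω, τ ω ∈ Set.Icc (0:ℝ) T

/-- A process adapted on the time interval `[0, T]`. -/
def AdaptedOn {Ω : Type*} {m : MeasurableSpace Ω} (F : Filtration ℝ m) (T : ℝ)
    (R : ℝ → Ω → ℝ) : Prop :=
  ∀ t ∈ Set.Icc (0:ℝ) T, StronglyMeasurable[F t] (R t)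

/-- A real function that is cadlag on `[0, T]`: right-continuous on `[0, T)` and
with left limits on `(0, T]`. -/
def CadlagOn (T : ℝ) (f : ℝ → ℝ) : Prop :=
  (∀ t ∈ Set.Ico (0:ℝ) T, Filter.Tendsto f (nhdsWithin t (Set.Ioi t)) (nhds (f t))) ∧
  (∀ t ∈ Set.Ioc (0:ℝ) T, ∃ l : ℝ, Filter.Tendsto f (nhdsWithin t (Set.Iio t)) (nhds l))

/-- A process of class (D): the family `{R_τ : τ a stopping time with values in [0,T]}`
is uniformly integrable. -/
def ClassD {Ω : Type*} {m : MeasurableSpace Ω} (F : Filtration ℝ m) (T : ℝ)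
    (P : Measure Ω) (R : ℝ → Ω → ℝ) : Prop :=
  UniformIntegrable
    (fun τ : {τ : Ω → ℝ // StoppingTimeIn F T τ} => fun ω => R (τ.1 ω) ω) 1 P

/-- A martingale on the time interval `[0, T]`: adapted, integrable, and satisfying the
martingale property `E[M_t | F_s] = M_s` for `0 ≤ s ≤ t ≤ T`. -/
def MartingaleOn {Ω : Type*} {m : MeasurableSpace Ω} (F : Filtration ℝ m) (T : ℝ)
    (P : Measure Ω) (M : ℝ → Ω → ℝ) : Prop :=
  AdaptedOn F T M ∧ (∀ t ∈ Set.Icc (0:ℝ) T, Integrable (M t) P) ∧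
    ∀ s ∈ Set.Icc (0:ℝ) T, ∀ t ∈ Set.Icc (0:ℝ) T, s ≤ t → P[M t | F s] =ᵐ[P] M s

open scoped NNReal ENNReal Topology

namespace OptStopAux

open MeasureTheory Filter Set

variable {Ω : Type*} {m : MeasurableSpace Ω}

/-- Iterated pointwise minimum: `minSeq τ n m = min (τ n) (τ (n+1)) ⋯ (τ (n+m))`. -/
noncomputable def minSeq (τ : ℕ → Ω → ℝ) : ℕ → ℕ → Ω → ℝ
  | n, 0 => τ n
  | n, m+1 => fun ω => min (minSeq τ n m ω) (τ (n+m+1) ω)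

lemma stoppingTimeIn_min {F : Filtration ℝ m} {T : ℝ} {a b : Ω → ℝ}
    (ha : StoppingTimeIn F T a) (hb : StoppingTimeIn F T b) :
    StoppingTimeIn F T (fun ω => min (a ω) (b ω)) := by
  refine ⟨ha.1.min hb.1, fun ω => ?_⟩
  have h1 := ha.2 ω; have h2 := hb.2 ω
  rw [Set.mem_Icc] at h1 h2 ⊢
  exact ⟨le_min h1.1 h2.1, min_le_of_left_le h1.2⟩

lemma stoppingTimeIn_max {F : Filtration ℝ m} {T : ℝ} {a b : Ω → ℝ}
    (ha : StoppingTimeIn F T a) (hb : StoppingTimeIn F T b) :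
    StoppingTimeIn F T (fun ω => max (a ω) (b ω)) := by
  refine ⟨ha.1.max hb.1, fun ω => ?_⟩
  have h1 := ha.2 ω; have h2 := hb.2 ω
  rw [Set.mem_Icc] at h1 h2 ⊢
  exact ⟨le_max_of_le_left h1.1, max_le h1.2 h2.2⟩

lemma minSeq_stoppingTimeIn {F : Filtration ℝ m} {T : ℝ} {τ : ℕ → Ω → ℝ}
    (h : ∀ n, StoppingTimeIn F T (τ n)) (n m : ℕ) :
    StoppingTimeIn F T (minSeq τ n m) := by
  induction m with
  | zero => exact h n
  | succ m ih => exact stoppingTimeIn_min ih (h (n + m + 1))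

lemma minSeq_succ_le {τ : ℕ → Ω → ℝ} (n m : ℕ) (ω : Ω) :
    minSeq τ n (m + 1) ω ≤ minSeq τ n m ω :=
  min_le_left _ _

lemma minSeq_shift {τ : ℕ → Ω → ℝ} (n m : ℕ) (ω : Ω) :
    minSeq τ n (m + 1) ω = min (τ n ω) (minSeq τ (n + 1) m ω) := by
  induction m with
  | zero => simp [minSeq]
  | succ m ih =>
      show min (minSeq τ n (m + 1) ω) (τ (n + (m + 1) + 1) ω)
          = min (τ n ω) (minSeq τ (n + 1) (m + 1) ω)
      have h1 : n + (m + 1) + 1 = (n + 1) + m + 1 := by ring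
      rw [ih, h1, min_assoc]
      rfl

/-- A countable infimum of nonnegative stopping times is a stopping time, for a
right-continuous filtration. -/
lemma isStoppingTime_iInf {F : Filtration ℝ m}
    (hright : ∀ t : ℝ, (F t : MeasurableSpace Ω) = ⨅ s ∈ Set.Ioi t, (F s : MeasurableSpace Ω))
    {ρ : ℕ → Ω → ℝ} (h : ∀ k, IsStoppingTime F (fun ω => (ρ k ω : WithTop ℝ)))
    (h0 : ∀ k ω, 0 ≤ ρ k ω) :
    IsStoppingTime F (fun ω => ((⨅ k, ρ k ω : ℝ) : WithTop ℝ)) := by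
  intro t
  simp only [WithTop.coe_le_coe]
  have hbdd : ∀ ω, BddBelow (Set.range fun k => ρ k ω) := fun ω =>
    ⟨0, by rintro x ⟨k, rfl⟩; exact h0 k ω⟩
  rw [hright t, MeasurableSpace.measurableSet_iInf]
  intro s
  rw [MeasurableSpace.measurableSet_iInf]
  intro hs
  rw [Set.mem_Ioi] at hs
  -- the target set as a countable intersection
  have hseteq : {ω | (fun ω => ⨅ k, ρ k ω) ω ≤ t}
      = ⋂ j : ℕ, {ω | (⨅ k, ρ k ω) < t + (s - t) / (j + 1)} := by
    ext ω
    simp only [Set.mem_setOf_eq, Set.mem_iInter]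
    constructor
    · intro hle j
      have hpos : 0 < (s - t) / (j + 1 : ℝ) := div_pos (by linarith) (by positivity)
      linarith
    · intro hall
      by_contra hlt
      push_neg at hlt
      obtain ⟨j, hj⟩ := exists_nat_gt ((s - t) / ((⨅ k, ρ k ω) - t))
      have hd : (0:ℝ) < (⨅ k, ρ k ω) - t := by linarith
      have hst : (0:ℝ) < s - t := by linarith
      have hj1 : (s - t) / ((⨅ k, ρ k ω) - t) < (j:ℝ) + 1 := by
        have : (j:ℝ) ≤ (j:ℝ) + 1 := by linarith
        linarith
      have hkey : (s - t) / ((j:ℝ) + 1) < (⨅ k, ρ k ω) - t := by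
        rw [div_lt_iff₀ (by positivity)]
        rw [div_lt_iff₀ hd] at hj1
        linarith [hj1]
      have := hall j
      linarith
  rw [hseteq]
  refine MeasurableSet.iInter fun j => ?_
  have hle_s : t + (s - t) / ((j:ℝ) + 1) ≤ s := by
    have h1 : (s - t) / ((j:ℝ) + 1) ≤ (s - t) / 1 := by
      apply div_le_div_of_nonneg_left (by linarith) (by norm_num) (by norm_num)
    simp at h1
    linarith
  refine F.mono hle_s _ ?_
  have hunion : {ω : Ω | (⨅ k, ρ k ω) < t + (s - t) / (j + 1)}
      = ⋃ k : ℕ, {ω | ρ k ω < t + (s - t) / (j + 1)} := by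
    ext ω
    simp only [Set.mem_setOf_eq, Set.mem_iUnion]
    constructor
    · exact fun hlt => exists_lt_of_ciInf_lt hlt
    · rintro ⟨k, hk⟩
      exact lt_of_le_of_lt (ciInf_le (hbdd ω) k) hk
  rw [hunion]
  exact MeasurableSet.iUnion fun k => by simpa only [WithTop.coe_lt_coe] using (h k).measurableSet_lt _

/-- A countable supremum of stopping times bounded by `T` is a stopping time. -/
lemma isStoppingTime_iSup {F : Filtration ℝ m} {T : ℝ}
    {ρ : ℕ → Ω → ℝ} (h : ∀ k, IsStoppingTime F (fun ω => (ρ k ω : WithTop ℝ)))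
    (hT : ∀ k ω, ρ k ω ≤ T) :
    IsStoppingTime F (fun ω => ((⨆ k, ρ k ω : ℝ) : WithTop ℝ)) := by
  intro t
  simp only [WithTop.coe_le_coe]
  have hbdd : ∀ ω, BddAbove (Set.range fun k => ρ k ω) := fun ω =>
    ⟨T, by rintro x ⟨k, rfl⟩; exact hT k ω⟩
  have hseteq : {ω | (fun ω => ⨆ k, ρ k ω) ω ≤ t} = ⋂ k : ℕ, {ω | ρ k ω ≤ t} := by
    ext ω
    simp only [Set.mem_setOf_eq, Set.mem_iInter]
    exact ciSup_le_iff (hbdd ω)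
  rw [hseteq]
  exact MeasurableSet.iInter fun k => by simpa only [WithTop.coe_le_coe] using (h k) t

variable {P : Measure Ω} {F : Filtration ℝ m} {T : ℝ} {R : ℝ → Ω → ℝ}

lemma integrable_stopped (hRD : ClassD F T P R) {τ : Ω → ℝ} (h : StoppingTimeIn F T τ) :
    Integrable (fun ω => R (τ ω) ω) P := by
  obtain ⟨C, hC⟩ := hRD.2.2
  rw [← memLp_one_iff_integrable]
  exact ⟨hRD.1 ⟨τ, h⟩, lt_of_le_of_lt (hC ⟨τ, h⟩) ENNReal.coe_lt_top⟩

lemma integral_stopped_le (hRD : ClassD F T P R) {C : ℝ≥0}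
    (hC : ∀ i : {τ : Ω → ℝ // StoppingTimeIn F T τ},
      eLpNorm (fun ω => R (i.1 ω) ω) 1 P ≤ C)
    {τ : Ω → ℝ} (h : StoppingTimeIn F T τ) :
    ∫ ω, R (τ ω) ω ∂P ≤ (C : ℝ≥0∞).toReal := by
  have hint := integrable_stopped hRD h
  have h1 : ∫ ω, R (τ ω) ω ∂P ≤ ∫ ω, ‖R (τ ω) ω‖ ∂P :=
    integral_mono hint hint.norm fun ω => by
      rw [Real.norm_eq_abs]; exact le_abs_self _
  rw [integral_norm_eq_lintegral_enorm (hRD.1 ⟨τ, h⟩)] at h1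
  refine h1.trans ?_
  refine ENNReal.toReal_mono ENNReal.coe_ne_top ?_
  rw [← eLpNorm_one_eq_lintegral_enorm]
  exact hC ⟨τ, h⟩

lemma integral_min_max (hRD : ClassD F T P R) {a b : Ω → ℝ}
    (ha : StoppingTimeIn F T a) (hb : StoppingTimeIn F T b) :
    ∫ ω, R (min (a ω) (b ω)) ω ∂P + ∫ ω, R (max (a ω) (b ω)) ω ∂P
      = ∫ ω, R (a ω) ω ∂P + ∫ ω, R (b ω) ω ∂P := by
  have h1 := integrable_stopped hRD (stoppingTimeIn_min ha hb)
  have h2 := integrable_stopped hRD (stoppingTimeIn_max ha hb)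
  have h3 := integrable_stopped hRD ha
  have h4 := integrable_stopped hRD hb
  rw [← integral_add h1 h2, ← integral_add h3 h4]
  apply integral_congr_ae
  filter_upwards with ω
  rcases le_total (a ω) (b ω) with h | h
  · rw [min_eq_left h, max_eq_right h]
  · rw [min_eq_right h, max_eq_left h]; ring

lemma tendsto_integral_stopped [IsFiniteMeasure P] (hRD : ClassD F T P R)
    (hRcont : ∀ ω, ContinuousOn (fun t => R t ω) (Set.Icc (0:ℝ) T))
    {ρ : ℕ → Ω → ℝ} (hρ : ∀ n, StoppingTimeIn F T (ρ n))
    {σ : Ω → ℝ} (hσ : StoppingTimeIn F T σ)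
    (hptw : ∀ ω, Tendsto (fun n => ρ n ω) atTop (𝓝 (σ ω))) :
    Tendsto (fun n => ∫ ω, R (ρ n ω) ω ∂P) atTop (𝓝 (∫ ω, R (σ ω) ω ∂P)) := by
  set f : ℕ → Ω → ℝ := fun n ω => R (ρ n ω) ω with hf
  set g : Ω → ℝ := fun ω => R (σ ω) ω with hg
  have hui : UnifIntegrable f 1 P := by
    intro ε hε
    obtain ⟨δ, hδ, hh⟩ := hRD.2.1 hε
    exact ⟨δ, hδ, fun n s hs hμ => hh ⟨ρ n, hρ n⟩ s hs hμ⟩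
  have haesm : ∀ n, AEStronglyMeasurable (f n) P := fun n => hRD.1 ⟨ρ n, hρ n⟩
  have hgmem : MemLp g 1 P := memLp_one_iff_integrable.mpr (integrable_stopped hRD hσ)
  have hfg : ∀ᵐ ω ∂P, Tendsto (fun n => f n ω) atTop (𝓝 (g ω)) := by
    filter_upwards with ω
    have hc : ContinuousWithinAt (fun t => R t ω) (Set.Icc (0:ℝ) T) (σ ω) :=
      (hRcont ω) (σ ω) (hσ.2 ω)
    have hwithin : Tendsto (fun n => ρ n ω) atTop (𝓝[Set.Icc (0:ℝ) T] (σ ω)) :=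
      tendsto_nhdsWithin_of_tendsto_nhds_of_eventually_within _ (hptw ω)
        (Eventually.of_forall fun n => (hρ n).2 ω)
    exact hc.tendsto.comp hwithin
  have hLp := tendsto_Lp_finite_of_tendsto_ae le_rfl ENNReal.one_ne_top haesm hgmem hui hfg
  refine tendsto_integral_of_L1 g (integrable_stopped hRD hσ).aestronglyMeasurable
    (Eventually.of_forall fun n => integrable_stopped hRD (hρ n)) ?_
  simpa only [eLpNorm_one_eq_lintegral_enorm, Pi.sub_apply] using hLp

end OptStopAux

/-- **Existence of optimal stopping times for continuous rewards.** A continuous adapted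
class (D) reward process `R` on `[0,T]` admits an optimal stopping time. -/
theorem exists_optimal_stopping_time_of_continuous
    {Ω : Type*} {m : MeasurableSpace Ω} (P : Measure Ω) [IsProbabilityMeasure P]
    (F : Filtration ℝ m) (T : ℝ) (hT : 0 < T)
    (hright : ∀ t : ℝ, (F t : MeasurableSpace Ω) = ⨅ s ∈ Set.Ioi t, (F s : MeasurableSpace Ω))
    (hnull : ∀ A : Set Ω, P A = 0 → MeasurableSet[F 0] A)
    (R : ℝ → Ω → ℝ)
    (hRadapted : AdaptedOn F T R)
    (hRcont : ∀ ω, ContinuousOn (fun t => R t ω) (Set.Icc (0:ℝ) T))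
    (hRD : ClassD F T P R) :
    ∃ τstar : Ω → ℝ, StoppingTimeIn F T τstar ∧
      IsGreatest {r : ℝ | ∃ τ : Ω → ℝ, StoppingTimeIn F T τ ∧ r = ∫ ω, R (τ ω) ω ∂P}
        (∫ ω, R (τstar ω) ω ∂P) := by
  classical
  obtain ⟨C, hC⟩ := hRD.2.2
  set S := {r : ℝ | ∃ τ : Ω → ℝ, StoppingTimeIn F T τ ∧ r = ∫ ω, R (τ ω) ω ∂P} with hS
  have hTmem : StoppingTimeIn F T (fun _ => T) :=
    ⟨isStoppingTime_const F T, fun ω => Set.mem_Icc.mpr ⟨hT.le, le_refl T⟩⟩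
  have hSne : S.Nonempty := ⟨_, ⟨_, hTmem, rfl⟩⟩
  have hSbdd : BddAbove S := by
    refine ⟨(C : ℝ≥0∞).toReal, ?_⟩
    rintro r ⟨τ, hτ, rfl⟩
    exact OptStopAux.integral_stopped_le hRD hC hτ
  set V := sSup S with hV
  have hub : ∀ {τ : Ω → ℝ}, StoppingTimeIn F T τ → ∫ ω, R (τ ω) ω ∂P ≤ V :=
    fun hτ => le_csSup hSbdd ⟨_, hτ, rfl⟩
  have hsel : ∀ n : ℕ, ∃ τ : Ω → ℝ, StoppingTimeIn F T τ ∧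
      V - (1/2)^n < ∫ ω, R (τ ω) ω ∂P := by
    intro n
    have hlt : V - (1/2:ℝ)^n < V := by
      have : (0:ℝ) < (1/2:ℝ)^n := by positivity
      linarith
    obtain ⟨r, hrS, hlt2⟩ := exists_lt_of_lt_csSup hSne hlt
    obtain ⟨τ, hτ, rfl⟩ := hrS
    exact ⟨τ, hτ, hlt2⟩
  choose τ hτst hτval using hsel
  have hminval : ∀ n m : ℕ,
      V - (2 - (1/2)^m) * (1/2)^n < ∫ ω, R (OptStopAux.minSeq τ n m ω) ω ∂P := by
    intro n m
    induction m with
    | zero =>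
        have e : (2 - (1/2:ℝ)^0) * (1/2:ℝ)^n = (1/2:ℝ)^n := by norm_num
        simp only [OptStopAux.minSeq]
        linarith [hτval n, e]
    | succ m ih =>
        have hast := OptStopAux.minSeq_stoppingTimeIn hτst n m
        have hbst := hτst (n + m + 1)
        have hkey := OptStopAux.integral_min_max hRD hast hbst
        have hmaxle := hub (OptStopAux.stoppingTimeIn_max hast hbst)
        have hbval := hτval (n + m + 1)
        have harith : (2 - (1/2:ℝ)^(m+1)) * (1/2:ℝ)^n
            = (2 - (1/2:ℝ)^m) * (1/2:ℝ)^n + (1/2:ℝ)^(n+m+1) := by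
          rw [pow_add, pow_succ]; ring
        simp only [OptStopAux.minSeq]
        linarith [hkey, hmaxle, hbval, ih, harith]
  set σ : ℕ → Ω → ℝ := fun n ω => ⨅ m, OptStopAux.minSeq τ n m ω with hσdef
  have hmin0 : ∀ n m (ω : Ω), 0 ≤ OptStopAux.minSeq τ n m ω := fun n m ω =>
    (Set.mem_Icc.mp ((OptStopAux.minSeq_stoppingTimeIn hτst n m).2 ω)).1
  have hminT : ∀ n m (ω : Ω), OptStopAux.minSeq τ n m ω ≤ T := fun n m ω =>
    (Set.mem_Icc.mp ((OptStopAux.minSeq_stoppingTimeIn hτst n m).2 ω)).2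
  have hbb : ∀ n (ω : Ω), BddBelow (Set.range fun m => OptStopAux.minSeq τ n m ω) := by
    intro n ω
    refine ⟨0, ?_⟩
    rintro x ⟨k, rfl⟩
    exact hmin0 n k ω
  have hσ0 : ∀ n (ω : Ω), 0 ≤ σ n ω := fun n ω => le_ciInf fun m => hmin0 n m ω
  have hσT : ∀ n (ω : Ω), σ n ω ≤ T := fun n ω => (ciInf_le (hbb n ω) 0).trans (hminT n 0 ω)
  have hσst : ∀ n, StoppingTimeIn F T (σ n) := fun n =>
    ⟨OptStopAux.isStoppingTime_iInf hright
        (fun m => (OptStopAux.minSeq_stoppingTimeIn hτst n m).1) (fun m ω => hmin0 n m ω),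
      fun ω => Set.mem_Icc.mpr ⟨hσ0 n ω, hσT n ω⟩⟩
  have hσtend : ∀ n (ω : Ω),
      Filter.Tendsto (fun m => OptStopAux.minSeq τ n m ω) Filter.atTop (nhds (σ n ω)) :=
    fun n ω => tendsto_atTop_ciInf
      (antitone_nat_of_succ_le fun m => OptStopAux.minSeq_succ_le n m ω) (hbb n ω)
  have hσval : ∀ n, V - 2 * (1/2:ℝ)^n ≤ ∫ ω, R (σ n ω) ω ∂P := by
    intro n
    have htend := OptStopAux.tendsto_integral_stopped hRD hRcont
      (fun m => OptStopAux.minSeq_stoppingTimeIn hτst n m) (hσst n) (hσtend n)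
    refine ge_of_tendsto htend (Filter.Eventually.of_forall fun m => ?_)
    have h1 := hminval n m
    have h2 : (0:ℝ) ≤ (1/2:ℝ)^m * (1/2:ℝ)^n := by positivity
    have hexp : (2 - (1/2:ℝ)^m) * (1/2:ℝ)^n
        = 2 * (1/2:ℝ)^n - (1/2:ℝ)^m * (1/2:ℝ)^n := by ring
    linarith [h1, h2, hexp]
  have hσmono : ∀ n (ω : Ω), σ n ω ≤ σ (n+1) ω := by
    intro n ω
    refine le_ciInf fun k => ?_
    calc σ n ω ≤ OptStopAux.minSeq τ n (k+1) ω := ciInf_le (hbb n ω) (k+1)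
      _ = min (τ n ω) (OptStopAux.minSeq τ (n+1) k ω) := OptStopAux.minSeq_shift n k ω
      _ ≤ _ := min_le_right _ _
  set τs : Ω → ℝ := fun ω => ⨆ n, σ n ω with hτsdef
  have hba : ∀ ω : Ω, BddAbove (Set.range fun n => σ n ω) := by
    intro ω
    refine ⟨T, ?_⟩
    rintro x ⟨k, rfl⟩
    exact hσT k ω
  have hτs0 : ∀ ω, 0 ≤ τs ω := fun ω => (hσ0 0 ω).trans (le_ciSup (hba ω) 0)
  have hτsT : ∀ ω, τs ω ≤ T := fun ω => ciSup_le fun n => hσT n ω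
  have hτsst : StoppingTimeIn F T τs :=
    ⟨OptStopAux.isStoppingTime_iSup (fun n => (hσst n).1) (fun n ω => hσT n ω),
      fun ω => Set.mem_Icc.mpr ⟨hτs0 ω, hτsT ω⟩⟩
  have hτstend : ∀ ω : Ω, Filter.Tendsto (fun n => σ n ω) Filter.atTop (nhds (τs ω)) :=
    fun ω => tendsto_atTop_ciSup (monotone_nat_of_le_succ fun n => hσmono n ω) (hba ω)
  have htend2 := OptStopAux.tendsto_integral_stopped hRD hRcont hσst hτsst hτstend
  have hgeo : Filter.Tendsto (fun n : ℕ => V - 2 * (1/2:ℝ)^n) Filter.atTop (nhds V) := by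
    have h1 : Filter.Tendsto (fun n : ℕ => (1/2:ℝ)^n) Filter.atTop (nhds 0) :=
      tendsto_pow_atTop_nhds_zero_of_lt_one (by norm_num) (by norm_num)
    have h2 := (h1.const_mul (2:ℝ)).const_sub V
    simpa using h2
  have hVle : V ≤ ∫ ω, R (τs ω) ω ∂P :=
    le_of_tendsto_of_tendsto' hgeo htend2 fun n => hσval n
  refine ⟨τs, hτsst, ⟨⟨τs, hτsst, rfl⟩, ?_⟩⟩
  intro r hr
  exact (le_csSup hSbdd hr).trans hVle
end

section
/- Let (Ω, F, (F_t)_{t∈[0,T]}, P) be a filtered probability space with finite horizon T > 0 satisfying the usual conditions (the filtration is right-continuous and F_0 contains all P-null sets). Let (R^n) be a sequence of adapted real-valued processes on [0,T] with cadlag paths, each of class (D) (i.e. for each n, the family {R^n_τ : τ a stopping time with values in [0,T]} is uniformly integrable), which is Cauchy in the norm ‖y‖ := sup_τ E[|y_τ|] (supremum over all stopping times τ with values in [0,T]): for every ε > 0 there is N such that sup_τ E[|R^n_τ − R^m_τ|] ≤ ε for all n, m ≥ N. Then there exists an adapted real-valued process R on [0,T] with cadlag paths, of class (D), such that sup_τ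 E[|R^n_τ − R_τ|] → 0 as n → ∞. -/
open MeasureTheory Filter Set
open scoped ENNReal NNReal

lemma aux_geom {a : ℕ → ℝ} {K : ℕ} (h : ∀ k ≥ K, |a (k+1) - a k| ≤ (2⁻¹:ℝ)^k) :
    ∀ k ≥ K, ∀ l, k ≤ l → |a l - a k| ≤ 2*(2⁻¹:ℝ)^k - 2*(2⁻¹:ℝ)^l := by
  intro k hk l hl
  induction l, hl using Nat.le_induction with
  | base => simp
  | succ l hkl ih =>
    have h1 := h l (le_trans hk hkl)
    have h2 : |a (l+1) - a k| ≤ |a (l+1) - a l| + |a l - a k| := by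
      have := abs_add_le (a (l+1) - a l) (a l - a k)
      simpa using this
    have h3 : (2*(2⁻¹:ℝ)^(l+1)) = (2⁻¹:ℝ)^l := by ring
    calc |a (l+1) - a k| ≤ |a (l+1) - a l| + |a l - a k| := h2
      _ ≤ (2⁻¹:ℝ)^l + (2*(2⁻¹:ℝ)^k - 2*(2⁻¹:ℝ)^l) := by linarith
      _ = 2*(2⁻¹:ℝ)^k - 2*(2⁻¹:ℝ)^(l+1) := by rw [h3]; ring

lemma aux_right {a : ℕ → ℝ → ℝ} {f : ℝ → ℝ} {T t : ℝ} (ht : t ∈ Set.Ico (0:ℝ) T)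
    (happrox : ∀ ε > (0:ℝ), ∃ k, ∀ s ∈ Set.Icc (0:ℝ) T, |a k s - f s| ≤ ε)
    (hr : ∀ k, Tendsto (a k) (nhdsWithin t (Set.Ioi t)) (nhds (a k t))) :
    Tendsto f (nhdsWithin t (Set.Ioi t)) (nhds (f t)) := by
  rw [Metric.tendsto_nhdsWithin_nhds]
  intro ε hε
  obtain ⟨k, hk⟩ := happrox (ε/4) (by linarith)
  obtain ⟨δ, hδ, hδ'⟩ := (Metric.tendsto_nhdsWithin_nhds.1 (hr k)) (ε/4) (by linarith)
  refine ⟨min δ (T - t), by simp [hδ]; linarith [ht.2], ?_⟩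
  intro s hs hd
  have hsd : dist s t < δ := lt_of_lt_of_le hd (min_le_left _ _)
  have hsT : s ∈ Set.Icc (0:ℝ) T := by
    constructor
    · exact le_of_lt (lt_of_le_of_lt ht.1 hs)
    · have : s - t < T - t := by
        have := lt_of_lt_of_le hd (min_le_right _ _)
        rw [Real.dist_eq, abs_of_pos (by linarith [mem_Ioi.1 hs] : (0:ℝ) < s - t)] at this
        linarith
      linarith
  have htT : t ∈ Set.Icc (0:ℝ) T := ⟨ht.1, le_of_lt ht.2⟩
  calc dist (f s) (f t) ≤ dist (f s) (a k s) + dist (a k s) (a k t) + dist (a k t) (f t) :=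
        dist_triangle4 _ _ _ _
    _ < ε/4 + ε/4 + ε/4 := by
        have e1 : dist (f s) (a k s) ≤ ε/4 := by
          rw [Real.dist_eq, abs_sub_comm]; exact hk s hsT
        have e2 : dist (a k t) (f t) ≤ ε/4 := by
          rw [Real.dist_eq]; exact hk t htT
        have e3 := hδ' hs hsd
        -- need strict: e3 is < ε/4
        linarith
    _ ≤ ε := by linarith

lemma aux_left {a : ℕ → ℝ → ℝ} {f : ℝ → ℝ} {T t : ℝ} (ht : t ∈ Set.Ioc (0:ℝ) T)
    (happrox : ∀ ε > (0:ℝ), ∃ k, ∀ s ∈ Set.Icc (0:ℝ) T, |a k s - f s| ≤ ε)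
    (hl : ∀ k, ∃ L, Tendsto (a k) (nhdsWithin t (Set.Iio t)) (nhds L)) :
    ∃ L, Tendsto f (nhdsWithin t (Set.Iio t)) (nhds L) := by
  have hcauchy : Cauchy (Filter.map f (nhdsWithin t (Set.Iio t))) := by
    refine Metric.cauchy_iff.2 ⟨Filter.map_neBot, ?_⟩
    intro ε hε
    obtain ⟨k, hk⟩ := happrox (ε/8) (by linarith)
    obtain ⟨L, hL⟩ := hl k
    have hU : {s : ℝ | dist (a k s) L < ε/8} ∈ nhdsWithin t (Set.Iio t) :=
      hL (Metric.ball_mem_nhds L (by linarith))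
    have hIoo : Set.Ioo (0:ℝ) t ∈ nhdsWithin t (Set.Iio t) := by
      rw [← Set.Ioi_inter_Iio]
      exact Filter.inter_mem (mem_nhdsWithin_of_mem_nhds (Ioi_mem_nhds ht.1)) self_mem_nhdsWithin
    set A := {s : ℝ | dist (a k s) L < ε/8} ∩ Set.Ioo (0:ℝ) t with hA
    have hAmem : A ∈ nhdsWithin t (Set.Iio t) := Filter.inter_mem hU hIoo
    refine ⟨f '' A, Filter.image_mem_map hAmem, ?_⟩
    rintro x ⟨s, hs, rfl⟩ y ⟨s', hs', rfl⟩
    have hsIcc : s ∈ Set.Icc (0:ℝ) T := ⟨le_of_lt hs.2.1, le_trans (le_of_lt hs.2.2) ht.2⟩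
    have hsIcc' : s' ∈ Set.Icc (0:ℝ) T := ⟨le_of_lt hs'.2.1, le_trans (le_of_lt hs'.2.2) ht.2⟩
    calc dist (f s) (f s') ≤ dist (f s) (a k s) + dist (a k s) (a k s') +
          dist (a k s') (f s') := dist_triangle4 _ _ _ _
      _ < ε := by
        have e0 : dist (a k s) (a k s') ≤ dist (a k s) L + dist L (a k s') := dist_triangle _ _ _
        have e1 : dist (f s) (a k s) ≤ ε/8 := by rw [Real.dist_eq, abs_sub_comm]; exact hk s hsIcc
        have e2 : dist (a k s') (f s') ≤ ε/8 := by rw [Real.dist_eq]; exact hk s' hsIcc'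
        have e3 : dist (a k s) L < ε/8 := hs.1
        have e4 : dist L (a k s') < ε/8 := by rw [dist_comm]; exact hs'.1
        linarith
  obtain ⟨L, hL⟩ := CompleteSpace.complete hcauchy
  exact ⟨L, hL⟩

lemma aux_absSet {Ω : Type*} {m0 : MeasurableSpace Ω} {g : Ω → ℝ} (hg : Measurable[m0] g)
    (lam : ℝ) : MeasurableSet[m0] {ω | lam < |g ω|} :=
  measurableSet_lt measurable_const hg.abs

lemma aux_maximal {Ω : Type*} {m : MeasurableSpace Ω} (P : Measure Ω) [IsProbabilityMeasure P]
    (F : Filtration ℝ m) {T : ℝ} (hT : 0 < T) {y : ℝ → Ω → ℝ}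
    (had : AdaptedOn F T y) (hc : ∀ ω, CadlagOn T (fun t => y t ω))
    (hint : ∀ τ : Ω → ℝ, StoppingTimeIn F T τ → Integrable (fun ω => y (τ ω) ω) P)
    {C lam : ℝ} (hlam : 0 < lam)
    (hbound : ∀ τ : Ω → ℝ, StoppingTimeIn F T τ → ∫ ω, |y (τ ω) ω| ∂P ≤ C) :
    P {ω | ∃ t ∈ Set.Icc (0:ℝ) T, lam < |y t ω|} ≤ ENNReal.ofReal (C / lam) := by
  classical
  -- countable dense set of times
  set D : Set ℝ := insert T {s : ℝ | s ∈ Set.Ico (0:ℝ) T ∧ ∃ q : ℚ, (q:ℝ) = s} with hD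
  have hDc : D.Countable := by
    apply Set.Countable.insert
    have : {s : ℝ | s ∈ Set.Ico (0:ℝ) T ∧ ∃ q : ℚ, (q:ℝ) = s} ⊆ Set.range (fun q : ℚ => (q:ℝ)) := by
      rintro s ⟨-, q, rfl⟩; exact ⟨q, rfl⟩
    exact (Set.countable_range _).mono this
  have hDsub : D ⊆ Set.Icc (0:ℝ) T := by
    rintro s (rfl | ⟨hs, -⟩)
    · exact ⟨le_of_lt hT, le_refl _⟩
    · exact ⟨hs.1, le_of_lt hs.2⟩
  obtain ⟨e, he⟩ := hDc.exists_eq_range ⟨T, Set.mem_insert _ _⟩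
  have heIcc : ∀ i, e i ∈ Set.Icc (0:ℝ) T := fun i => hDsub (he ▸ ⟨i, rfl⟩)
  -- the events
  set A : ℕ → Set Ω := fun K => {ω | ∃ i ≤ K, lam < |y (e i) ω|} with hA
  have hyMeas : ∀ i, Measurable[F (e i)] (y (e i)) := fun i => (had (e i) (heIcc i)).measurable
  have hySet : ∀ i, MeasurableSet[F (e i)] {ω | lam < |y (e i) ω|} :=
    fun i => aux_absSet (hyMeas i) lam
  have hAmeas : ∀ K, MeasurableSet (A K) := by
    intro K
    have : A K = ⋃ i, ⋃ _ : i ≤ K, {ω | lam < |y (e i) ω|} := by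
      ext ω; simp [hA]
    rw [this]
    refine MeasurableSet.iUnion fun i => MeasurableSet.iUnion fun _ => ?_
    exact F.le (e i) _ (hySet i)
  -- the stopping times
  have key : ∀ K, P (A K) ≤ ENNReal.ofReal (C / lam) := by
    intro K
    set Q : Ω → Finset ℕ := fun ω => (Finset.range (K+1)).filter (fun i => lam < |y (e i) ω|) with hQ
    set τ : Ω → ℝ := fun ω => if h : (Q ω).Nonempty then (Q ω).inf' h e else T with hτdef
    have hτIcc : ∀ ω, τ ω ∈ Set.Icc (0:ℝ) T := by
      intro ω
      by_cases h : (Q ω).Nonempty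
      · simp only [hτdef, dif_pos h]
        obtain ⟨i, _, hie⟩ := Finset.exists_mem_eq_inf' h e
        rw [hie]; exact heIcc i
      · simp only [hτdef, dif_neg h]; exact ⟨le_of_lt hT, le_refl _⟩
    have hτst : IsStoppingTime F (fun ω => (τ ω : WithTop ℝ)) := by
      intro u
      simp only [WithTop.coe_le_coe]
      by_cases hu : T ≤ u
      · have : {ω | τ ω ≤ u} = Set.univ := by
          ext ω; simp only [Set.mem_setOf_eq, Set.mem_univ, iff_true]
          exact le_trans (hτIcc ω).2 hu
        rw [this]; exact MeasurableSet.univ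
      · push_neg at hu
        have hset : {ω | τ ω ≤ u} = ⋃ i, ⋃ _ : i ≤ K ∧ e i ≤ u, {ω | lam < |y (e i) ω|} := by
          ext ω
          simp only [Set.mem_setOf_eq, Set.mem_iUnion]
          constructor
          · intro hτu
            by_cases h : (Q ω).Nonempty
            · rw [hτdef] at hτu; simp only [dif_pos h] at hτu
              obtain ⟨i, hiQ, hie⟩ := Finset.exists_mem_eq_inf' h e
              rw [hQ, Finset.mem_filter, Finset.mem_range] at hiQ
              exact ⟨i, ⟨Nat.lt_succ_iff.1 hiQ.1, by rw [← hie]; exact hτu⟩, hiQ.2⟩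
            · rw [hτdef] at hτu; simp only [dif_neg h] at hτu; linarith
          · rintro ⟨i, ⟨hiK, hiu⟩, hiy⟩
            have hiQ : i ∈ Q ω := by
              rw [hQ, Finset.mem_filter, Finset.mem_range]
              exact ⟨Nat.lt_succ_of_le hiK, hiy⟩
            have h : (Q ω).Nonempty := ⟨i, hiQ⟩
            rw [hτdef]; simp only [dif_pos h]
            exact le_trans (Finset.inf'_le e hiQ) hiu
        rw [hset]
        refine MeasurableSet.iUnion fun i => MeasurableSet.iUnion fun hi => ?_
        exact (F.mono hi.2) _ (hySet i)
    have hτin : StoppingTimeIn F T τ := ⟨hτst, hτIcc⟩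
    -- on A K, |y (τ ω) ω| ≥ lam
    have hge : ∀ ω ∈ A K, lam ≤ |y (τ ω) ω| := by
      intro ω hω
      obtain ⟨i, hiK, hiy⟩ := hω
      have hiQ : i ∈ Q ω := by
        rw [hQ, Finset.mem_filter, Finset.mem_range]
        exact ⟨Nat.lt_succ_of_le hiK, hiy⟩
      have h : (Q ω).Nonempty := ⟨i, hiQ⟩
      rw [hτdef]; simp only [dif_pos h]
      obtain ⟨j, hjQ, hje⟩ := Finset.exists_mem_eq_inf' h e
      rw [hje]
      rw [hQ, Finset.mem_filter] at hjQ
      exact le_of_lt hjQ.2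
    have hI := hint τ hτin
    have h1 : lam * (P (A K)).toReal ≤ ∫ ω in A K, |y (τ ω) ω| ∂P := by
      have := setIntegral_mono_on (integrableOn_const (measure_ne_top P (A K)))
        hI.abs.integrableOn (hAmeas K) hge
      calc lam * (P (A K)).toReal = ∫ _ in A K, lam ∂P := by
            rw [setIntegral_const]; rw [smul_eq_mul]; rw [measureReal_def]; ring
        _ ≤ _ := this
    have h2 : ∫ ω in A K, |y (τ ω) ω| ∂P ≤ ∫ ω, |y (τ ω) ω| ∂P := by
      apply setIntegral_le_integral hI.abs
      filter_upwards with ω using abs_nonneg _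
    have h3 : lam * (P (A K)).toReal ≤ C := le_trans h1 (le_trans h2 (hbound τ hτin))
    have h4 : (P (A K)).toReal ≤ C / lam := by
      rw [le_div_iff₀ hlam]; linarith
    calc P (A K) = ENNReal.ofReal ((P (A K)).toReal) :=
          (ENNReal.ofReal_toReal (measure_ne_top P _)).symm
      _ ≤ ENNReal.ofReal (C / lam) := ENNReal.ofReal_le_ofReal h4
  -- the target is contained in the union
  have hsub : {ω | ∃ t ∈ Set.Icc (0:ℝ) T, lam < |y t ω|} ⊆ ⋃ K, A K := by
    rintro ω ⟨t, ht, hty⟩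
    rcases eq_or_lt_of_le ht.2 with rfl | htT
    · have hTD : t ∈ D := Set.mem_insert _ _
      rw [he] at hTD
      obtain ⟨i, hi⟩ := hTD
      exact Set.mem_iUnion.2 ⟨i, i, le_refl i, by rw [hi]; exact hty⟩
    · have hrc := (hc ω).1 t ⟨ht.1, htT⟩
      have hev : ∀ᶠ s in nhdsWithin t (Set.Ioi t), lam < |y s ω| := by
        have habs : Tendsto (fun s => |y s ω|) (nhdsWithin t (Set.Ioi t)) (nhds |y t ω|) :=
          (continuous_abs.tendsto _).comp hrc
        exact habs (lt_mem_nhds hty)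
      obtain ⟨u, hu, huS⟩ := mem_nhdsGT_iff_exists_Ioo_subset.1 hev
      obtain ⟨q, hq1, hq2⟩ := exists_rat_btwn (lt_min (Set.mem_Ioi.1 hu) htT)
      have hqIoo : (q:ℝ) ∈ Set.Ioo t u := ⟨hq1, lt_of_lt_of_le hq2 (min_le_left _ _)⟩
      have hqD : (q:ℝ) ∈ D := by
        refine Set.mem_insert_of_mem _ ⟨⟨le_trans ht.1 (le_of_lt hq1),
          lt_of_lt_of_le hq2 (min_le_right _ _)⟩, q, rfl⟩
      rw [he] at hqD
      obtain ⟨i, hi⟩ := hqD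
      refine Set.mem_iUnion.2 ⟨i, i, le_refl i, ?_⟩
      rw [hi]; exact huS hqIoo
  have hmono : Monotone A := by
    intro K K' hKK' ω ⟨i, hiK, hiy⟩
    exact ⟨i, le_trans hiK hKK', hiy⟩
  calc P {ω | ∃ t ∈ Set.Icc (0:ℝ) T, lam < |y t ω|} ≤ P (⋃ K, A K) := measure_mono hsub
    _ = ⨆ K, P (A K) := hmono.measure_iUnion
    _ ≤ ENNReal.ofReal (C / lam) := iSup_le key

lemma aux_smeas {Ω : Type*} {m0 : MeasurableSpace Ω} {g : ℕ → Ω → ℝ} {f : Ω → ℝ}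
    (hg : ∀ k, StronglyMeasurable[m0] (g k))
    (h : ∀ ω, Tendsto (fun k => g k ω) atTop (nhds (f ω))) :
    StronglyMeasurable[m0] f :=
  stronglyMeasurable_of_tendsto atTop hg (tendsto_pi_nhds.2 h)

lemma aux_indmeas {Ω : Type*} {m0 : MeasurableSpace Ω} {g : Ω → ℝ} {G : Set Ω}
    (hg : StronglyMeasurable[m0] g) (hG : MeasurableSet[m0] G) :
    StronglyMeasurable[m0] (G.indicator g) := hg.indicator hG

lemma aux_eLpNorm_eq {Ω : Type*} {m0 : MeasurableSpace Ω} {P : Measure Ω} {f : Ω → ℝ}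
    (hf : Integrable f P) : eLpNorm f 1 P = ENNReal.ofReal (∫ ω, |f ω| ∂P) := by
  rw [eLpNorm_one_eq_lintegral_enorm, ← ofReal_integral_norm_eq_lintegral_enorm hf]
  simp [Real.norm_eq_abs]

lemma aux_cadlag_sub {T : ℝ} {f g : ℝ → ℝ} (hf : CadlagOn T f) (hg : CadlagOn T g) :
    CadlagOn T (fun t => f t - g t) := by
  constructor
  · intro t ht; exact (hf.1 t ht).sub (hg.1 t ht)
  · intro t ht
    obtain ⟨l1, h1⟩ := hf.2 t ht
    obtain ⟨l2, h2⟩ := hg.2 t ht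
    exact ⟨l1 - l2, h1.sub h2⟩

/-- **Completeness of the space `D¹`.** A sequence of adapted cadlag class (D) processes
which is Cauchy in the norm `‖y‖ = sup_τ E|y_τ|` converges in that norm to an adapted
cadlag class (D) process. -/
theorem classD_complete
    {Ω : Type*} {m : MeasurableSpace Ω} (P : Measure Ω) [IsProbabilityMeasure P]
    (F : Filtration ℝ m) (T : ℝ) (hT : 0 < T)
    (hright : ∀ t : ℝ, (F t : MeasurableSpace Ω) = ⨅ s ∈ Set.Ioi t, (F s : MeasurableSpace Ω))
    (hnull : ∀ A : Set Ω, P A = 0 → MeasurableSet[F 0] A)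
    (R : ℕ → ℝ → Ω → ℝ)
    (hadapted : ∀ n, AdaptedOn F T (R n))
    (hcadlag : ∀ n ω, CadlagOn T (fun t => R n t ω))
    (hD : ∀ n, ClassD F T P (R n))
    (hcauchy : ∀ ε : ℝ, 0 < ε → ∃ N : ℕ, ∀ n ≥ N, ∀ m' ≥ N,
      ∀ τ : Ω → ℝ, StoppingTimeIn F T τ →
        ∫ ω, |R n (τ ω) ω - R m' (τ ω) ω| ∂P ≤ ε) :
    ∃ S : ℝ → Ω → ℝ,
      AdaptedOn F T S ∧ (∀ ω, CadlagOn T (fun t => S t ω)) ∧ ClassD F T P S ∧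
      ∀ ε : ℝ, 0 < ε → ∃ N : ℕ, ∀ n ≥ N,
        ∀ τ : Ω → ℝ, StoppingTimeIn F T τ →
          ∫ ω, |R n (τ ω) ω - S (τ ω) ω| ∂P ≤ ε := by
  classical
  have hmemint : ∀ n (τ : Ω → ℝ), StoppingTimeIn F T τ →
      Integrable (fun ω => R n (τ ω) ω) P := by
    intro n τ hτ
    obtain ⟨Cn, hCn⟩ := (hD n).2.2
    exact memLp_one_iff_integrable.1 ⟨(hD n).1 ⟨τ, hτ⟩,
      lt_of_le_of_lt (hCn ⟨τ, hτ⟩) ENNReal.coe_lt_top⟩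
  -- subsequence
  have hchoice : ∀ k : ℕ, ∃ N : ℕ, ∀ n ≥ N, ∀ m' ≥ N, ∀ τ : Ω → ℝ, StoppingTimeIn F T τ →
      ∫ ω, |R n (τ ω) ω - R m' (τ ω) ω| ∂P ≤ (4⁻¹:ℝ)^k :=
    fun k => hcauchy _ (by positivity)
  choose Nf hNf using hchoice
  set ns : ℕ → ℕ := fun k => k + (Finset.range (k+1)).sum Nf with hns
  have hnsk : ∀ k, k ≤ ns k := fun k => Nat.le_add_right _ _
  have hnsN : ∀ j k, j ≤ k → Nf j ≤ ns k := by
    intro j k hjk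
    calc Nf j ≤ (Finset.range (k+1)).sum Nf :=
          Finset.single_le_sum (fun i _ => Nat.zero_le _)
            (Finset.mem_range.2 (Nat.lt_succ_of_le hjk))
      _ ≤ ns k := Nat.le_add_left _ _
  have hstep : ∀ k, ∀ τ : Ω → ℝ, StoppingTimeIn F T τ →
      ∫ ω, |R (ns (k+1)) (τ ω) ω - R (ns k) (τ ω) ω| ∂P ≤ (4⁻¹:ℝ)^k :=
    fun k τ hτ => hNf k _ (hnsN k (k+1) (Nat.le_succ k)) _ (hnsN k k le_rfl) τ hτ
  -- Borel-Cantelli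
  set B : ℕ → Set Ω := fun k =>
    {ω | ∃ t ∈ Set.Icc (0:ℝ) T, (2⁻¹:ℝ)^k < |R (ns (k+1)) t ω - R (ns k) t ω|} with hB
  have hdiv : ∀ k : ℕ, ((4:ℝ)⁻¹)^k / ((2:ℝ)⁻¹)^k = ((2:ℝ)⁻¹)^k := by
    intro k
    rw [div_eq_iff (by positivity), ← mul_pow]; norm_num
  have hPB : ∀ k, P (B k) ≤ ENNReal.ofReal ((2⁻¹:ℝ)^k) := by
    intro k
    have h := aux_maximal P F hT (y := fun t ω => R (ns (k+1)) t ω - R (ns k) t ω)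
      (fun t ht => (hadapted _ t ht).sub (hadapted _ t ht))
      (fun ω => aux_cadlag_sub (hcadlag _ ω) (hcadlag _ ω))
      (fun τ hτ => (hmemint _ τ hτ).sub (hmemint _ τ hτ))
      (C := (4⁻¹:ℝ)^k) (lam := (2⁻¹:ℝ)^k) (by positivity)
      (hstep k)
    rw [hdiv k] at h
    exact h
  have hsum : ∑' k, P (B k) ≠ ⊤ := by
    have h1 : ∑' k, P (B k) ≤ ∑' k, ENNReal.ofReal ((2⁻¹:ℝ)^k) := ENNReal.tsum_le_tsum hPB
    have h2 : ∑' k, ENNReal.ofReal ((2⁻¹:ℝ)^k) = ENNReal.ofReal (∑' k, (2⁻¹:ℝ)^k) :=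
      (ENNReal.ofReal_tsum_of_nonneg (fun k => by positivity)
        (summable_geometric_of_lt_one (by norm_num) (by norm_num))).symm
    exact ne_top_of_le_ne_top (by rw [h2]; exact ENNReal.ofReal_ne_top) h1
  set G : Set Ω := (limsup B atTop)ᶜ with hGdef
  have hlimsup0 : P (limsup B atTop) = 0 := measure_limsup_atTop_eq_zero hsum
  have hGc : P Gᶜ = 0 := by rw [hGdef, compl_compl]; exact hlimsup0
  have hG0 : MeasurableSet[F 0] G := (hnull _ hlimsup0).compl
  have hGae : ∀ᵐ ω ∂P, ω ∈ G := by
    rw [MeasureTheory.ae_iff]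
    exact hGc
  have hGgood : ∀ ω ∈ G, ∃ K, ∀ k ≥ K, ∀ t ∈ Set.Icc (0:ℝ) T,
      |R (ns (k+1)) t ω - R (ns k) t ω| ≤ (2⁻¹:ℝ)^k := by
    intro ω hω
    have h1 : ¬ ∃ᶠ k in atTop, ω ∈ B k := fun hfreq =>
      hω (mem_limsup_iff_frequently_mem.2 hfreq)
    rw [Filter.not_frequently] at h1
    obtain ⟨K, hK⟩ := Filter.eventually_atTop.1 h1
    refine ⟨K, fun k hk t ht => ?_⟩
    have h2 := hK k hk
    rw [hB] at h2
    simp only [Set.mem_setOf_eq, not_exists, not_and, not_lt] at h2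
    exact h2 t ht
  -- definition of the limit process
  set S : ℝ → Ω → ℝ := fun t ω => if t ∈ Set.Icc (0:ℝ) T then
    limUnder atTop (fun k => Set.indicator G (R (ns k) t) ω) else 0 with hS
  have htendsto : ∀ (t : ℝ), t ∈ Set.Icc (0:ℝ) T → ∀ ω,
      Tendsto (fun k => Set.indicator G (R (ns k) t) ω) atTop (nhds (S t ω)) := by
    intro t ht ω
    have hSt : S t ω = limUnder atTop (fun k => Set.indicator G (R (ns k) t) ω) := by
      rw [hS]; simp only [if_pos ht]
    by_cases hω : ω ∈ G
    · have hfun : (fun k => Set.indicator G (R (ns k) t) ω) = fun k => R (ns k) t ω :=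
        funext fun k => Set.indicator_of_mem hω _
      rw [hSt, hfun]
      apply tendsto_nhds_limUnder
      obtain ⟨K, hK⟩ := hGgood ω hω
      have hCS : CauchySeq (fun k => R (ns k) t ω) := by
        rw [← cauchySeq_shift K]
        apply cauchySeq_of_le_geometric 2⁻¹ ((2⁻¹:ℝ)^K) (by norm_num)
        intro n
        have h1 := hK (n + K) (Nat.le_add_left K n) t ht
        have h2 : n + 1 + K = (n + K) + 1 := by ring
        rw [Real.dist_eq, h2, abs_sub_comm, ← pow_add]
        calc |R (ns (n + K + 1)) t ω - R (ns (n + K)) t ω| ≤ (2⁻¹:ℝ)^(n+K) := h1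
          _ = (2⁻¹:ℝ)^(K+n) := by rw [add_comm]
      exact cauchySeq_tendsto_of_complete hCS
    · have hfun : (fun k => Set.indicator G (R (ns k) t) ω) = fun _ => (0:ℝ) :=
        funext fun k => Set.indicator_of_notMem hω _
      rw [hSt, hfun]
      rw [Filter.Tendsto.limUnder_eq (tendsto_const_nhds (x := (0:ℝ)) (f := atTop))]
      exact tendsto_const_nhds
  have htendstoG : ∀ ω ∈ G, ∀ t ∈ Set.Icc (0:ℝ) T,
      Tendsto (fun k => R (ns k) t ω) atTop (nhds (S t ω)) := by
    intro ω hω t ht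
    have h := htendsto t ht ω
    have hfun : (fun k => Set.indicator G (R (ns k) t) ω) = fun k => R (ns k) t ω :=
      funext fun k => Set.indicator_of_mem hω _
    rwa [hfun] at h
  have hzero : ∀ ω ∉ G, ∀ t, S t ω = 0 := by
    intro ω hω t
    by_cases ht : t ∈ Set.Icc (0:ℝ) T
    · rw [hS]; simp only [if_pos ht]
      have hfun : (fun k => Set.indicator G (R (ns k) t) ω) = fun _ => (0:ℝ) :=
        funext fun k => Set.indicator_of_notMem hω _
      rw [hfun]
      exact Filter.Tendsto.limUnder_eq (tendsto_const_nhds (x := (0:ℝ)) (f := atTop))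
    · rw [hS]; simp only [if_neg ht]
  have hunif : ∀ ω ∈ G, ∀ ε > (0:ℝ), ∃ K, ∀ k ≥ K, ∀ t ∈ Set.Icc (0:ℝ) T,
      |R (ns k) t ω - S t ω| ≤ ε := by
    intro ω hω ε hε
    obtain ⟨K₀, hK₀⟩ := hGgood ω hω
    obtain ⟨K₁, hK₁⟩ := exists_pow_lt_of_lt_one (x := ε/2) (y := (2⁻¹:ℝ))
      (by linarith) (by norm_num)
    refine ⟨max K₀ K₁, fun k hk t ht => ?_⟩
    have hk0 : K₀ ≤ k := le_trans (le_max_left _ _) hk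
    have hk1 : K₁ ≤ k := le_trans (le_max_right _ _) hk
    have hgeom := aux_geom (a := fun l => R (ns l) t ω) (K := K₀)
      (fun l hl => hK₀ l hl t ht) k hk0
    have hlim : Tendsto (fun l => |R (ns l) t ω - R (ns k) t ω|) atTop
        (nhds |S t ω - R (ns k) t ω|) :=
      ((htendstoG ω hω t ht).sub_const _).abs
    have h1 : |S t ω - R (ns k) t ω| ≤ 2*(2⁻¹:ℝ)^k := by
      apply le_of_tendsto hlim
      filter_upwards [Filter.eventually_ge_atTop k] with l hl
      have := hgeom l hl
      have hpos : (0:ℝ) ≤ 2*(2⁻¹:ℝ)^l := by positivity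
      linarith
    have hpow : (2⁻¹:ℝ)^k ≤ (2⁻¹:ℝ)^K₁ :=
      pow_le_pow_of_le_one (by norm_num) (by norm_num) hk1
    rw [abs_sub_comm]
    calc |S t ω - R (ns k) t ω| ≤ 2*(2⁻¹:ℝ)^k := h1
      _ ≤ 2*(2⁻¹:ℝ)^K₁ := by linarith
      _ ≤ ε := by linarith
  -- cadlag paths
  have hScadlag : ∀ ω, CadlagOn T (fun t => S t ω) := by
    intro ω
    by_cases hω : ω ∈ G
    · constructor
      · intro t ht
        apply aux_right (a := fun k s => R (ns k) s ω) ht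
        · intro ε hε
          obtain ⟨K, hK⟩ := hunif ω hω ε hε
          exact ⟨K, fun s hs => hK K le_rfl s hs⟩
        · exact fun k => (hcadlag (ns k) ω).1 t ht
      · intro t ht
        apply aux_left (a := fun k s => R (ns k) s ω) ht
        · intro ε hε
          obtain ⟨K, hK⟩ := hunif ω hω ε hε
          exact ⟨K, fun s hs => hK K le_rfl s hs⟩
        · exact fun k => (hcadlag (ns k) ω).2 t ht
    · have hfun : (fun t => S t ω) = fun _ => (0:ℝ) := funext fun t => hzero ω hω t
      rw [hfun]
      exact ⟨fun t _ => tendsto_const_nhds, fun t _ => ⟨0, tendsto_const_nhds⟩⟩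
  -- adaptedness
  have hSadapted : AdaptedOn F T S := by
    intro t ht
    have hGt : MeasurableSet[F t] G := F.mono ht.1 _ hG0
    exact aux_smeas (g := fun k => Set.indicator G (R (ns k) t))
      (fun k => aux_indmeas (hadapted (ns k) t ht) hGt)
      (fun ω => htendsto t ht ω)
  -- a.e. measurability of stopped S
  have hSmeasAE : ∀ τ : Ω → ℝ, StoppingTimeIn F T τ →
      AEStronglyMeasurable (fun ω => S (τ ω) ω) P := by
    intro τ hτ
    apply aestronglyMeasurable_of_tendsto_ae atTop
      (fun k => (hmemint (ns k) τ hτ).aestronglyMeasurable)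
    filter_upwards [hGae] with ω hω
    exact htendstoG ω hω (τ ω) (hτ.2 ω)
  -- main convergence estimate
  have main : ∀ ε > (0:ℝ), ∃ N, ∀ n ≥ N, ∀ τ : Ω → ℝ, StoppingTimeIn F T τ →
      Integrable (fun ω => R n (τ ω) ω - S (τ ω) ω) P ∧
      ∫ ω, |R n (τ ω) ω - S (τ ω) ω| ∂P ≤ ε := by
    intro ε hε
    obtain ⟨N, hN⟩ := hcauchy (ε/2) (by linarith)
    refine ⟨N, fun n hn τ hτ => ?_⟩
    have hae : ∀ᵐ ω ∂P, Tendsto (fun k => R (ns k) (τ ω) ω) atTop (nhds (S (τ ω) ω)) := by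
      filter_upwards [hGae] with ω hω
      exact htendstoG ω hω (τ ω) (hτ.2 ω)
    have hbound : ∫⁻ ω, (‖R n (τ ω) ω - S (τ ω) ω‖₊ : ℝ≥0∞) ∂P ≤ ENNReal.ofReal (ε/2) := by
      have heq : ∀ᵐ ω ∂P, (‖R n (τ ω) ω - S (τ ω) ω‖₊ : ℝ≥0∞) =
          liminf (fun k => (‖R n (τ ω) ω - R (ns k) (τ ω) ω‖₊ : ℝ≥0∞)) atTop := by
        filter_upwards [hae] with ω hω
        have h1 : Tendsto (fun k => R n (τ ω) ω - R (ns k) (τ ω) ω) atTop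
            (nhds (R n (τ ω) ω - S (τ ω) ω)) := tendsto_const_nhds.sub hω
        exact ((ENNReal.tendsto_coe.2 h1.nnnorm).liminf_eq).symm
      calc ∫⁻ ω, (‖R n (τ ω) ω - S (τ ω) ω‖₊ : ℝ≥0∞) ∂P
          = ∫⁻ ω, liminf (fun k => (‖R n (τ ω) ω - R (ns k) (τ ω) ω‖₊ : ℝ≥0∞)) atTop ∂P :=
            lintegral_congr_ae heq
        _ ≤ liminf (fun k => ∫⁻ ω, (‖R n (τ ω) ω - R (ns k) (τ ω) ω‖₊ : ℝ≥0∞) ∂P) atTop :=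
            lintegral_liminf_le' (fun k =>
              ((hmemint n τ hτ).sub (hmemint (ns k) τ hτ)).aestronglyMeasurable.enorm)
        _ ≤ ENNReal.ofReal (ε/2) := by
            apply Filter.liminf_le_of_frequently_le _ isBounded_ge_of_bot
            apply Filter.Eventually.frequently
            filter_upwards [Filter.eventually_ge_atTop N] with k hk
            have hint2 : Integrable (fun ω => R n (τ ω) ω - R (ns k) (τ ω) ω) P :=
              (hmemint n τ hτ).sub (hmemint (ns k) τ hτ)
            change ∫⁻ ω, ‖R n (τ ω) ω - R (ns k) (τ ω) ω‖ₑ ∂P ≤ _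
            rw [← ofReal_integral_norm_eq_lintegral_enorm hint2]
            apply ENNReal.ofReal_le_ofReal
            have hNk : N ≤ ns k := le_trans hk (hnsk k)
            have h3 := hN n hn (ns k) hNk τ hτ
            simpa [Real.norm_eq_abs] using h3
    have hintdiff : Integrable (fun ω => R n (τ ω) ω - S (τ ω) ω) P := by
      refine ⟨(hmemint n τ hτ).aestronglyMeasurable.sub (hSmeasAE τ hτ), ?_⟩
      exact lt_of_le_of_lt hbound ENNReal.ofReal_lt_top
    refine ⟨hintdiff, ?_⟩
    have h2 : ENNReal.ofReal (∫ ω, ‖R n (τ ω) ω - S (τ ω) ω‖ ∂P) ≤ ENNReal.ofReal (ε/2) := by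
      rw [ofReal_integral_norm_eq_lintegral_enorm hintdiff]
      exact hbound
    have h3 := (ENNReal.ofReal_le_ofReal_iff (by linarith)).1 h2
    calc ∫ ω, |R n (τ ω) ω - S (τ ω) ω| ∂P
        = ∫ ω, ‖R n (τ ω) ω - S (τ ω) ω‖ ∂P := by simp [Real.norm_eq_abs]
      _ ≤ ε/2 := h3
      _ ≤ ε := by linarith
  -- integrability of stopped S
  obtain ⟨N₁, hN₁⟩ := main 1 one_pos
  have hSint : ∀ τ : Ω → ℝ, StoppingTimeIn F T τ → Integrable (fun ω => S (τ ω) ω) P := by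
    intro τ hτ
    have h := (hmemint N₁ τ hτ).sub (hN₁ N₁ le_rfl τ hτ).1
    exact h.congr (Filter.Eventually.of_forall fun ω => by simp only [Pi.sub_apply]; ring)
  -- class D
  have hSclassD : ClassD F T P S := by
    refine ⟨fun i => hSmeasAE i.1 i.2, ?_, ?_⟩
    · intro ε hε
      obtain ⟨N₂, hN₂⟩ := main (ε/2) (by linarith)
      obtain ⟨δ, hδpos, hδ⟩ := (hD N₂).2.1 (show (0:ℝ) < ε/2 by linarith)
      refine ⟨δ, hδpos, ?_⟩
      rintro ⟨τ, hτ⟩ s hs hμs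
      have hmain := hN₂ N₂ le_rfl τ hτ
      have hint1 : Integrable (fun ω => S (τ ω) ω - R N₂ (τ ω) ω) P :=
        hmain.1.neg.congr (Filter.Eventually.of_forall fun ω => by
          simp only [Pi.neg_apply]; ring)
      have hdec : s.indicator (fun ω => S (τ ω) ω) =
          fun ω => s.indicator (fun ω => S (τ ω) ω - R N₂ (τ ω) ω) ω +
            s.indicator (fun ω => R N₂ (τ ω) ω) ω := by
        funext ω
        by_cases hω : ω ∈ s
        · simp only [Set.indicator_of_mem hω]; ring
        · simp only [Set.indicator_of_notMem hω]; ring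
      calc eLpNorm (s.indicator fun ω => S (τ ω) ω) 1 P
          = eLpNorm (fun ω => s.indicator (fun ω => S (τ ω) ω - R N₂ (τ ω) ω) ω +
              s.indicator (fun ω => R N₂ (τ ω) ω) ω) 1 P := by rw [hdec]
        _ ≤ eLpNorm (s.indicator fun ω => S (τ ω) ω - R N₂ (τ ω) ω) 1 P +
              eLpNorm (s.indicator fun ω => R N₂ (τ ω) ω) 1 P :=
            eLpNorm_add_le (hint1.aestronglyMeasurable.indicator hs)
              ((hmemint N₂ τ hτ).aestronglyMeasurable.indicator hs) le_rfl
        _ ≤ ENNReal.ofReal (ε/2) + ENNReal.ofReal (ε/2) := by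
            apply add_le_add
            · calc eLpNorm (s.indicator fun ω => S (τ ω) ω - R N₂ (τ ω) ω) 1 P
                  ≤ eLpNorm (fun ω => S (τ ω) ω - R N₂ (τ ω) ω) 1 P := eLpNorm_indicator_le _
                _ = ENNReal.ofReal (∫ ω, |S (τ ω) ω - R N₂ (τ ω) ω| ∂P) := aux_eLpNorm_eq hint1
                _ ≤ ENNReal.ofReal (ε/2) := by
                    apply ENNReal.ofReal_le_ofReal
                    have heq : ∫ ω, |S (τ ω) ω - R N₂ (τ ω) ω| ∂P =
                        ∫ ω, |R N₂ (τ ω) ω - S (τ ω) ω| ∂P := by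
                      congr 1; funext ω; exact abs_sub_comm _ _
                    rw [heq]; exact hmain.2
            · exact hδ ⟨τ, hτ⟩ s hs hμs
        _ = ENNReal.ofReal ε := by
            rw [← ENNReal.ofReal_add (by linarith) (by linarith)]
            norm_num
    · obtain ⟨C₃, hC₃⟩ := (hD N₁).2.2
      refine ⟨C₃ + 1, ?_⟩
      rintro ⟨τ, hτ⟩
      have hmain := hN₁ N₁ le_rfl τ hτ
      have hint1 : Integrable (fun ω => S (τ ω) ω - R N₁ (τ ω) ω) P :=
        hmain.1.neg.congr (Filter.Eventually.of_forall fun ω => by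
          simp only [Pi.neg_apply]; ring)
      have hdec : (fun ω => S (τ ω) ω) =
          fun ω => (S (τ ω) ω - R N₁ (τ ω) ω) + R N₁ (τ ω) ω := funext fun ω => by ring
      calc eLpNorm (fun ω => S (τ ω) ω) 1 P
          = eLpNorm (fun ω => (S (τ ω) ω - R N₁ (τ ω) ω) + R N₁ (τ ω) ω) 1 P := by rw [hdec]
        _ ≤ eLpNorm (fun ω => S (τ ω) ω - R N₁ (τ ω) ω) 1 P +
              eLpNorm (fun ω => R N₁ (τ ω) ω) 1 P :=
            eLpNorm_add_le hint1.aestronglyMeasurable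
              (hmemint N₁ τ hτ).aestronglyMeasurable le_rfl
        _ ≤ ENNReal.ofReal 1 + (C₃ : ℝ≥0∞) := by
            apply add_le_add
            · rw [aux_eLpNorm_eq hint1]
              apply ENNReal.ofReal_le_ofReal
              have heq : ∫ ω, |S (τ ω) ω - R N₁ (τ ω) ω| ∂P =
                  ∫ ω, |R N₁ (τ ω) ω - S (τ ω) ω| ∂P := by
                congr 1; funext ω; exact abs_sub_comm _ _
              rw [heq]; exact hmain.2
            · exact hC₃ ⟨τ, hτ⟩
        _ ≤ ((C₃ + 1 : ℝ≥0) : ℝ≥0∞) := by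
            rw [ENNReal.ofReal_one, ENNReal.coe_add, ENNReal.coe_one, add_comm]
  exact ⟨S, hSadapted, hScadlag, hSclassD, fun ε hε =>
    (main ε hε).imp fun N hN n hn τ hτ => (hN n hn τ hτ).2⟩
end
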